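/- Given ordered posterior null probabilities fdr₍₁₎ ≤ fdr₍₂₎ ≤ ... ≤ fdr₍p₎ in [0,1] and α ∈ (0,1) with fdr₍₁₎ ≤ α, let J = max{j : (1/j)Σᵢ₌₁ʲ fdr₍ᵢ₎ ≤ α}. Then rejecting the J hypotheses with smallest fdr scores yields a posterior expected false discovery proportion E[V/R | X] = (1/J)Σᵢ₌₁ᴶ fdr₍ᵢ₎ ≤ α, and J is the maximum number of rejections among all subsets S with (1/|S|)Σᵢ∈S fdrᵢ ≤ α. -/
import Mathlib

/-- For a monotone function, the sum over `range S.card` (the smallest indices)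
is at most the sum over `S`. -/
lemma sum_range_card_le_sum (f : ℕ → ℝ) (hf : Monotone f) (S : Finset ℕ) :
    ∑ i ∈ Finset.range S.card, f i ≤ ∑ i ∈ S, f i := by
  induction S using Finset.strongInduction with
  | _ S ih =>
    rcases S.eq_empty_or_nonempty with rfl | hS
    · simp
    · set m := S.max' hS with hm
      have hmem : m ∈ S := S.max'_mem hS
      have hpos : 0 < S.card := Finset.card_pos.mpr hS
      have hcard : (S.erase m).card = S.card - 1 := Finset.card_erase_of_mem hmem
      have hsub : S ⊆ Finset.range (m + 1) := fun x hx =>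
        Finset.mem_range.mpr (Nat.lt_succ_of_le (S.le_max' x hx))
      have hk : S.card ≤ m + 1 := by
        have := Finset.card_le_card hsub
        simpa using this
      have hih := ih (S.erase m) (Finset.erase_ssubset hmem)
      rw [hcard] at hih
      have hsplit : ∑ i ∈ Finset.range S.card, f i
          = (∑ i ∈ Finset.range (S.card - 1), f i) + f (S.card - 1) := by
        conv_lhs => rw [show S.card = (S.card - 1) + 1 from
          (Nat.succ_pred_eq_of_pos hpos).symm]
        rw [Finset.sum_range_succ]
      have hfm : f (S.card - 1) ≤ f m := hf (by omega)
      have hS' : (∑ i ∈ S.erase m, f i) + f m = ∑ i ∈ S, f i :=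
        Finset.sum_erase_add S f hmem
      rw [hsplit, ← hS']
      exact add_le_add hih hfm

theorem stepup_rule_optimal
    (p : ℕ) (hp : 1 ≤ p) (α : ℝ) (hα : 0 < α) (hα1 : α < 1)
    (fdr : ℕ → ℝ) (hmono : Monotone fdr)
    (hbound : ∀ i, i < p → fdr i ∈ Set.Icc (0:ℝ) 1)
    (hfirst : fdr 0 ≤ α)
    (J : ℕ)
    (hJ : J = Nat.findGreatest
      (fun j => (∑ i ∈ Finset.range j, fdr i) ≤ α * j) p) :
    1 ≤ J
    ∧ (1 / (J : ℝ)) * (∑ i ∈ Finset.range J, fdr i) ≤ α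
    ∧ ∀ S : Finset ℕ, S ⊆ Finset.range p → S.Nonempty →
        (1 / (S.card : ℝ)) * (∑ i ∈ S, fdr i) ≤ α → S.card ≤ J := by
  have hP1 : (∑ i ∈ Finset.range 1, fdr i) ≤ α * (1 : ℕ) := by
    simpa using hfirst
  have hJ1 : 1 ≤ J := by
    rw [hJ]
    exact Nat.le_findGreatest hp hP1
  have hJpos : (0 : ℝ) < (J : ℝ) := by exact_mod_cast hJ1
  have hPJ : (∑ i ∈ Finset.range J, fdr i) ≤ α * J := by
    have := Nat.findGreatest_spec (P := fun j => (∑ i ∈ Finset.range j, fdr i) ≤ α * j)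
      hp hP1
    rw [← hJ] at this
    exact this
  refine ⟨hJ1, ?_, ?_⟩
  · rw [one_div, inv_mul_le_iff₀ hJpos, mul_comm]
    exact hPJ
  · intro S hSp hSne hSavg
    have hk : S.card ≤ p := by
      have := Finset.card_le_card hSp
      simpa using this
    have hkpos : (0 : ℝ) < (S.card : ℝ) := by
      exact_mod_cast Finset.card_pos.mpr hSne
    have hsum : (∑ i ∈ S, fdr i) ≤ α * S.card := by
      rw [one_div, inv_mul_le_iff₀ hkpos, mul_comm] at hSavg
      exact hSavg
    have hPk : (∑ i ∈ Finset.range S.card, fdr i) ≤ α * S.card :=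
      le_trans (sum_range_card_le_sum fdr hmono S) hsum
    rw [hJ]
    exact Nat.le_findGreatest hk hPk
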